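/- arXiv:2403.06849 — 2 statements merged into one kernel-verified Lean document; each statement's English description precedes it below -/
import Mathlib

section
/- Let G be a group, let a, c ∈ G satisfy orderOf a = 2, orderOf c = 2, orderOf (a * c) = 7, and let b ∈ G be an arbitrary element. Then there exists an element s of the subgroup generated by {a, c} such that s * s = 1, s ∉ {a, b, c}, orderOf (a * s) = 7, and orderOf (c * s) = 7. -/
private lemma order_seven {G : Type*} [Group G] (x : G) (h7 : x ^ 7 = 1)
    (h1 : x ≠ 1) : orderOf x = 7 := by
  have hd : orderOf x ∣ 7 := orderOf_dvd_of_pow_eq_one h7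
  rcases (Nat.Prime.eq_one_or_self_of_dvd (by norm_num) _ hd) with h | h
  · exact absurd (orderOf_eq_one_iff.mp h) h1
  · exact h

/-- Given two involutions `a`, `c` whose product has order 7 and an arbitrary
element `b`, there is an involution `s` in the dihedral subgroup `⟨a, c⟩`
distinct from `a`, `b`, `c` with `orderOf (a * s) = orderOf (c * s) = 7`. -/
theorem exists_reflection {G : Type*} [Group G] (a c : G)
    (ha : orderOf a = 2) (hc : orderOf c = 2) (hac : orderOf (a * c) = 7)
    (b : G) :
    ∃ s ∈ Subgroup.closure ({a, c} : Set G),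
      s * s = 1 ∧ s ∉ ({a, b, c} : Set G) ∧
      orderOf (a * s) = 7 ∧ orderOf (c * s) = 7 := by
  set t := a * c with ht
  have ha1 : a * a = 1 := by
    have h := pow_orderOf_eq_one a
    rw [ha] at h; simpa [pow_succ] using h
  have hc1 : c * c = 1 := by
    have h := pow_orderOf_eq_one c
    rw [hc] at h; simpa [pow_succ] using h
  have hainv : a⁻¹ = a := inv_eq_of_mul_eq_one_right ha1
  have ht7 : t ^ 7 = 1 := by rw [← hac]; exact pow_orderOf_eq_one t
  have htne : ∀ k : ℕ, 0 < k → k < 7 → t ^ k ≠ 1 := by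
    intro k hk hk7 h
    have hd := orderOf_dvd_of_pow_eq_one h
    rw [hac] at hd
    have := Nat.le_of_dvd hk hd
    omega
  -- c * a = t⁻¹
  have hca : c * a = t⁻¹ := by
    apply eq_inv_of_mul_eq_one_left
    calc c * a * t = c * (a * (a * c)) := by rw [ht]; group
      _ = c * ((a * a) * c) := by rw [mul_assoc]
      _ = 1 := by rw [ha1, one_mul, hc1]
  -- c = a * t
  have hct : c = a * t := by rw [ht, ← mul_assoc, ha1, one_mul]
  -- a * t * a⁻¹ = t⁻¹
  have key : a * t * a⁻¹ = t⁻¹ := by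
    rw [hainv, show a * t = c from hct.symm, hca]
  have hconj : ∀ n : ℕ, a * (t ^ n * a) = (t⁻¹) ^ n := by
    intro n
    have h := conj_pow (a := a) (b := t) (i := n)
    rw [key] at h
    rw [h, hainv, mul_assoc]
  have hcconj : ∀ n : ℕ, c * (t ^ n * a) = (t⁻¹) ^ (n + 1) := by
    intro n
    rw [hct, mul_assoc, ← mul_assoc t, ← pow_succ']
    exact hconj (n + 1)
  have hord : ∀ k : ℕ, 0 < k → k < 7 → orderOf ((t⁻¹) ^ k) = 7 := by
    intro k hk hk7
    apply order_seven
    · rw [← pow_mul, mul_comm, pow_mul, inv_pow, ht7, inv_one, one_pow]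
    · intro h
      rw [inv_pow, inv_eq_one] at h
      exact htne k hk hk7 h
  have hss : ∀ k : ℕ, (t ^ k * a) * (t ^ k * a) = 1 := by
    intro k
    rw [mul_assoc, hconj k, inv_pow, mul_inv_cancel]
  -- membership facts
  have amem : a ∈ Subgroup.closure ({a, c} : Set G) :=
    Subgroup.subset_closure (by simp)
  have cmem : c ∈ Subgroup.closure ({a, c} : Set G) :=
    Subgroup.subset_closure (by simp)
  have tmem : t ∈ Subgroup.closure ({a, c} : Set G) := mul_mem amem cmem
  have smem : ∀ k : ℕ, t ^ k * a ∈ Subgroup.closure ({a, c} : Set G) :=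
    fun k => mul_mem (pow_mem tmem k) amem
  -- distinctness from a and c
  have hne_a : ∀ k : ℕ, 0 < k → k < 7 → t ^ k * a ≠ a := by
    intro k hk hk7 h
    apply htne k hk hk7
    have : t ^ k * a = 1 * a := by rw [one_mul]; exact h
    exact mul_right_cancel this
  have hne_c : ∀ k : ℕ, 0 < k → k + 1 < 7 → t ^ k * a ≠ c := by
    intro k hk hk7 h
    apply htne (k + 1) (by omega) hk7
    have h2 : t ^ k * a * a = c * a := by rw [h]
    rw [mul_assoc, ha1, mul_one, hca] at h2
    rw [pow_succ, h2, inv_mul_cancel]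
  -- choose s depending on b
  by_cases hb : b = t ^ 1 * a
  · refine ⟨t ^ 2 * a, smem 2, hss 2, ?_, ?_, ?_⟩
    · simp only [Set.mem_insert_iff, Set.mem_singleton_iff, not_or]
      refine ⟨hne_a 2 (by norm_num) (by norm_num), ?_, hne_c 2 (by norm_num) (by norm_num)⟩
      rw [hb]
      intro h
      have h2 : t ^ 2 * a * a⁻¹ = t ^ 1 * a * a⁻¹ := by rw [h]
      rw [mul_inv_cancel_right, mul_inv_cancel_right] at h2
      have h3 : t = 1 := by
        have h4 : t ^ 2 * (t ^ 1)⁻¹ = 1 := by rw [h2, mul_inv_cancel]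
        rwa [pow_two, pow_one, mul_inv_cancel_right] at h4
      exact htne 1 (by norm_num) (by norm_num) (by simpa using h3)
    · rw [hconj 2]; exact hord 2 (by norm_num) (by norm_num)
    · rw [hcconj 2]; exact hord 3 (by norm_num) (by norm_num)
  · refine ⟨t ^ 1 * a, smem 1, hss 1, ?_, ?_, ?_⟩
    · simp only [Set.mem_insert_iff, Set.mem_singleton_iff, not_or]
      exact ⟨hne_a 1 (by norm_num) (by norm_num), fun h => hb h.symm,
        hne_c 1 (by norm_num) (by norm_num)⟩
    · rw [hconj 1]; exact hord 1 (by norm_num) (by norm_num)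
    · rw [hcconj 1]; exact hord 2 (by norm_num) (by norm_num)
end

section
/- Let G be a finite group generated by elements a, b, c satisfying a² = b² = c² = 1, (a*b)² = 1, (b*c)³ = 1, and such that orderOf a = 2, orderOf c = 2 and orderOf (c * a) = 7. Then there exist an integer x ≥ 2, an element s ∈ G with s * s = 1 and s ∉ {a, b, c}, and a surjective group homomorphism ψ : C_x →* G, where C_x is the presented group with generators r₁, r₂, r₃, r₄ and relators r₁², r₂², r₃², r₄², (r₁r₂)², (r₂r₃)³, (r₃r₁)⁷, (r₁r₄)⁷, (r₂r₄)ˣ, (r₃r₄)⁷, such that ψ(r₁) = a, ψ(r₂) = b, ψ(r₃) = c, ψ(r₄) = s, orderOf (a * s) = 7, orderOf (c * s) = 7, and x = orderOf (b * s). -/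
/-- The relators of the Coxeter group `C_x` of the truncated hyperbolic
tetrahedron `T_x`. -/
def tetrahedralRels (x : ℕ) : Set (FreeGroup (Fin 4)) :=
  {(FreeGroup.of 0) ^ 2, (FreeGroup.of 1) ^ 2, (FreeGroup.of 2) ^ 2,
   (FreeGroup.of 3) ^ 2,
   (FreeGroup.of 0 * FreeGroup.of 1) ^ 2,
   (FreeGroup.of 1 * FreeGroup.of 2) ^ 3,
   (FreeGroup.of 2 * FreeGroup.of 0) ^ 7,
   (FreeGroup.of 0 * FreeGroup.of 3) ^ 7,
   (FreeGroup.of 1 * FreeGroup.of 3) ^ x,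
   (FreeGroup.of 2 * FreeGroup.of 3) ^ 7}

/-- The Coxeter group `C_x` of the truncated hyperbolic tetrahedron `T_x`. -/
def Cx (x : ℕ) : Type := PresentedGroup (tetrahedralRels x)

instance (x : ℕ) : Group (Cx x) := by unfold Cx; infer_instance

/-- The group-theoretic core of the proof of Theorem 1: a finite quotient of
the extended triangle group `[2,3,7]` (with the generators keeping their
orders) receives a surjection from a Coxeter group `C_x` extending the given
one. -/
theorem exists_extension_to_Cx {G : Type*} [Group G] [Finite G] (a b c : G)
    (ha2 : a ^ 2 = 1) (hb2 : b ^ 2 = 1) (hc2 : c ^ 2 = 1)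
    (hab : (a * b) ^ 2 = 1) (hbc : (b * c) ^ 3 = 1)
    (ha : orderOf a = 2) (hc : orderOf c = 2) (hca : orderOf (c * a) = 7)
    (hgen : Subgroup.closure ({a, b, c} : Set G) = ⊤) :
    ∃ (x : ℕ), 2 ≤ x ∧ ∃ s : G, s * s = 1 ∧ s ∉ ({a, b, c} : Set G) ∧
      orderOf (a * s) = 7 ∧ orderOf (c * s) = 7 ∧ x = orderOf (b * s) ∧
      ∃ ψ : Cx x →* G, Function.Surjective ψ ∧
        ψ (PresentedGroup.of 0) = a ∧ ψ (PresentedGroup.of 1) = b ∧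
        ψ (PresentedGroup.of 2) = c ∧ ψ (PresentedGroup.of 3) = s := by
  set t := c * a with ht
  have hainv : a⁻¹ = a := by
    rw [← mul_eq_one_iff_inv_eq]; rw [← sq]; exact ha2
  have hcinv : c⁻¹ = c := by
    rw [← mul_eq_one_iff_inv_eq]; rw [← sq]; exact hc2
  have hata : a * t * a = t⁻¹ := by
    rw [ht, mul_inv_rev, hainv, hcinv, mul_assoc, mul_assoc c, ← sq, ha2, mul_one]
  -- key lemma parametrized by k
  have key : ∀ k : ℕ, (k = 1 ∨ k = 2) → a * t ^ k ≠ b →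
      ∃ (x : ℕ), 2 ≤ x ∧ ∃ s : G, s * s = 1 ∧ s ∉ ({a, b, c} : Set G) ∧
      orderOf (a * s) = 7 ∧ orderOf (c * s) = 7 ∧ x = orderOf (b * s) ∧
      ∃ ψ : Cx x →* G, Function.Surjective ψ ∧
        ψ (PresentedGroup.of 0) = a ∧ ψ (PresentedGroup.of 1) = b ∧
        ψ (PresentedGroup.of 2) = c ∧ ψ (PresentedGroup.of 3) = s := by
    intro k hk hkb
    set s := a * t ^ k with hs
    have hata' : ∀ n : ℕ, a * t ^ n * a = (t ^ n)⁻¹ := by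
      intro n
      calc a * t ^ n * a = (a * t * a⁻¹) ^ n := by rw [conj_pow, hainv]
        _ = (t ^ n)⁻¹ := by rw [hainv, hata, inv_pow]
    have hss : s * s = 1 := by
      rw [hs]
      calc a * t ^ k * (a * t ^ k) = (a * t ^ k * a) * t ^ k := by group
        _ = 1 := by rw [hata' k, inv_mul_cancel]
    have has : a * s = t ^ k := by rw [hs, ← mul_assoc, ← sq, ha2, one_mul]
    have hcs : c * s = t ^ (k + 1) := by
      rw [hs, ← mul_assoc, show c * a = t from rfl, pow_succ']
    have hok : orderOf (t ^ k) = 7 := by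
      rcases hk with rfl | rfl
      · simpa using hca
      · rw [orderOf_pow, hca]; decide
    have hok1 : orderOf (t ^ (k + 1)) = 7 := by
      rcases hk with rfl | rfl
      · rw [orderOf_pow, hca]; decide
      · rw [orderOf_pow, hca]; decide
    have hsa : s ≠ a := by
      intro h
      rw [hs, mul_eq_left] at h
      have := orderOf_eq_one_iff.mpr h
      rw [hok] at this; norm_num at this
    have hsc : s ≠ c := by
      intro h
      have : t ^ (k + 1) = 1 := by
        rw [← hcs, h, ← sq, hc2]
      have := orderOf_eq_one_iff.mpr this
      rw [hok1] at this; norm_num at this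
    have hsb : s ≠ b := hkb
    have hbs1 : b * s ≠ 1 := by
      intro h
      apply hsb
      have : b * (b * s) = b * 1 := by rw [h]
      rwa [← mul_assoc, ← sq, hb2, one_mul, mul_one] at this
    have hx2 : 2 ≤ orderOf (b * s) :=
      (Nat.two_le_iff _).mpr ⟨(orderOf_pos (b * s)).ne',
        fun h => hbs1 (orderOf_eq_one_iff.mp h)⟩
    refine ⟨orderOf (b * s), hx2, s, hss, ?_, ?_, ?_, rfl, ?_⟩
    · intro hmem
      simp only [Set.mem_insert_iff, Set.mem_singleton_iff] at hmem
      rcases hmem with h | h | h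
      exacts [hsa h, hsb h, hsc h]
    · rw [has]; exact hok
    · rw [hcs]; exact hok1
    · -- homomorphism
      set x := orderOf (b * s)
      have hrels : ∀ r ∈ tetrahedralRels x,
          FreeGroup.lift (![a, b, c, s] : Fin 4 → G) r = 1 := by
        intro r hr
        simp only [tetrahedralRels, Set.mem_insert_iff, Set.mem_singleton_iff] at hr
        have h7a : (a * s) ^ 7 = 1 := by
          rw [has, ← hok]; exact pow_orderOf_eq_one _
        have h7c : (c * s) ^ 7 = 1 := by
          rw [hcs, ← hok1]; exact pow_orderOf_eq_one _
        have h7ca : (c * a) ^ 7 = 1 := by rw [← hca]; exact pow_orderOf_eq_one _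
        have hxbs : (b * s) ^ x = 1 := pow_orderOf_eq_one _
        have hs2 : s ^ 2 = 1 := by rw [sq]; exact hss
        rcases hr with rfl|rfl|rfl|rfl|rfl|rfl|rfl|rfl|rfl|rfl <;>
          simp [map_pow, map_mul, ha2, hb2, hc2, hab, hbc, h7a, h7c, h7ca, hxbs, hs2]
      refine ⟨PresentedGroup.toGroup hrels, ?_, ?_, ?_, ?_, ?_⟩
      · refine (MonoidHom.range_eq_top (f := (PresentedGroup.toGroup hrels : PresentedGroup (tetrahedralRels x) →* G))).mp ?_
        rw [← top_le_iff, ← hgen, Subgroup.closure_le]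
        rintro g (rfl | rfl | rfl)
        · exact ⟨PresentedGroup.of 0, PresentedGroup.toGroup.of hrels⟩
        · exact ⟨PresentedGroup.of 1, PresentedGroup.toGroup.of hrels⟩
        · exact ⟨PresentedGroup.of 2, PresentedGroup.toGroup.of hrels⟩
      all_goals exact PresentedGroup.toGroup.of hrels
  have ht1 : t ≠ 1 := by
    intro h; have := orderOf_eq_one_iff.mpr h; rw [hca] at this; norm_num at this
  by_cases h : a * t = b
  · refine key 2 (Or.inr rfl) ?_
    intro h2
    rw [← h, sq, ← mul_assoc] at h2
    have h3 : a * t * t = a * t * 1 := by rw [mul_one]; exact h2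
    exact ht1 (mul_left_cancel h3)
  · exact key 1 (Or.inl rfl) (by simpa using h)
end
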